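/- Let R < ∞, η > 0, ε > 0 and L < ∞. There exists a polynomial Φ : ℂ → ℂ such that |Φ(ζ) − (L + ε)| < ε whenever |ζ| ≤ R and Re ζ ≥ 1, and |Φ(ζ)| < ε whenever |ζ| ≤ R and Re ζ ≤ 1 − η. -/

import Mathlib

open Complex Finset Polynomial

namespace Complex

noncomputable def abs : AbsoluteValue ℂ ℝ := NormedField.toAbsoluteValue ℂ

theorem norm_eq_abs (z : ℂ) : ‖z‖ = abs z := rfl

theorem abs_I : abs I = 1 := by simp [← norm_eq_abs]

theorem abs_ofReal (r : ℝ) : abs (r : ℂ) = |r| := by simp [← norm_eq_abs]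

theorem abs_two : abs 2 = 2 := by simp [← norm_eq_abs]

theorem abs_re_le_abs (z : ℂ) : |z.re| ≤ abs z := abs_re_le_norm z

theorem abs_im_le_abs (z : ℂ) : |z.im| ≤ abs z := abs_im_le_norm z

end Complex

namespace Stmt16Aux

noncomputable section

lemma log_div_no_wrap {w w' : ℂ} (hw : w ≠ 0) (hw' : w' ≠ 0)
    (h1 : -Real.pi < w'.arg - w.arg) (h2 : w'.arg - w.arg ≤ Real.pi) :
    Complex.log (w' / w) = Complex.log w' - Complex.log w := by
  have he : Complex.exp (Complex.log w' - Complex.log w) = w' / w := by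
    rw [Complex.exp_sub, Complex.exp_log hw', Complex.exp_log hw]
  have him : (Complex.log w' - Complex.log w).im = w'.arg - w.arg := by
    simp [Complex.sub_im, Complex.log_im]
  rw [← he, Complex.log_exp (by rw [him]; exact h1) (by rw [him]; exact h2)]

lemma log_div_wrap {w w' : ℂ} (hw : w ≠ 0) (hw' : w' ≠ 0)
    (h1 : -(2 * Real.pi) < w'.arg - w.arg) (h2 : w'.arg - w.arg ≤ -Real.pi) :
    Complex.log (w' / w) = Complex.log w' - Complex.log w + 2 * Real.pi * I := by
  have he : Complex.exp (Complex.log w' - Complex.log w + 2 * Real.pi * I) = w' / w := by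
    rw [Complex.exp_add, Complex.exp_two_pi_mul_I, mul_one, Complex.exp_sub,
      Complex.exp_log hw', Complex.exp_log hw]
  have him : (Complex.log w' - Complex.log w + 2 * Real.pi * I).im
      = w'.arg - w.arg + 2 * Real.pi := by
    simp [Complex.add_im, Complex.sub_im, Complex.log_im]
  rw [← he, Complex.log_exp (by rw [him]; linarith) (by rw [him]; linarith)]

lemma arg_UL {w : ℂ} (h1 : w.re < 0) (h2 : 0 ≤ w.im) :
    Real.pi / 2 < w.arg ∧ w.arg ≤ Real.pi := by
  refine ⟨?_, Complex.arg_le_pi w⟩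
  by_contra h
  push_neg at h
  rcases Complex.arg_le_pi_div_two_iff.mp h with h' | h' <;> linarith

lemma arg_LL {w : ℂ} (h1 : w.re < 0) (h2 : w.im < 0) :
    -Real.pi < w.arg ∧ w.arg < -(Real.pi / 2) := by
  refine ⟨Complex.neg_pi_lt_arg w, ?_⟩
  by_contra h
  push_neg at h
  rcases Complex.neg_pi_div_two_le_arg_iff.mp h with h' | h' <;> linarith

lemma arg_RR {w : ℂ} (h1 : 0 < w.re) : |w.arg| < Real.pi / 2 :=
  Complex.abs_arg_lt_pi_div_two_iff.mpr (Or.inl h1)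

variable (R η : ℝ)

/-- the abscissa of the separating vertical line -/
def bb : ℝ := 1 - η / 2

/-- the compact set on which we approximate -/
def K : Set ℂ := {ζ : ℂ | Complex.abs ζ ≤ R ∧ (1 ≤ ζ.re ∨ ζ.re ≤ 1 - η)}

/-- `f` is uniformly approximable by polynomials on `K R η` -/
def Approx (f : ℂ → ℂ) : Prop :=
  ∀ δ : ℝ, 0 < δ → ∃ p : Polynomial ℂ, ∀ ζ ∈ K R η, Complex.abs (f ζ - p.eval ζ) ≤ δ

variable {R η}

lemma approx_const (c : ℂ) : Approx R η fun _ => c := fun δ hδ =>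
  ⟨Polynomial.C c, fun ζ _ => by simp [hδ.le]⟩

lemma K_abs {ζ : ℂ} (hζ : ζ ∈ K R η) : Complex.abs ζ ≤ |R| :=
  le_trans hζ.1 (le_abs_self R)

lemma Approx.bound {f : ℂ → ℂ} (hf : Approx R η f) :
    ∃ M : ℝ, 0 ≤ M ∧ ∀ ζ ∈ K R η, Complex.abs (f ζ) ≤ M := by
  obtain ⟨p, hp⟩ := hf 1 one_pos
  obtain ⟨C, hC⟩ := (isCompact_closedBall (0 : ℂ) |R|).exists_bound_of_continuousOn
    p.continuous_aeval.continuousOn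
  refine ⟨max C 0 + 1, by positivity, fun ζ hζ => ?_⟩
  have hball : ζ ∈ Metric.closedBall (0 : ℂ) |R| := by
    simpa [Complex.dist_eq, Complex.norm_eq_abs] using K_abs hζ
  have h1 := hC ζ hball
  have h2 := hp ζ hζ
  have h3 : Complex.abs (f ζ) ≤ Complex.abs (f ζ - p.eval ζ) + Complex.abs (p.eval ζ) := by
    simpa using Complex.abs.add_le (f ζ - p.eval ζ) (p.eval ζ)
  have h4 : Complex.abs (p.eval ζ) ≤ max C 0 := by
    refine le_trans ?_ (le_max_left C 0)
    simpa [Complex.norm_eq_abs, Polynomial.aeval_def, Polynomial.eval₂_eq_eval_map] using h1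
  linarith

lemma Approx.add {f g : ℂ → ℂ} (hf : Approx R η f) (hg : Approx R η g) :
    Approx R η fun ζ => f ζ + g ζ := by
  intro δ hδ
  obtain ⟨p, hp⟩ := hf (δ / 2) (by positivity)
  obtain ⟨q, hq⟩ := hg (δ / 2) (by positivity)
  refine ⟨p + q, fun ζ hζ => ?_⟩
  have h1 := hp ζ hζ
  have h2 := hq ζ hζ
  have : f ζ + g ζ - (p + q).eval ζ = (f ζ - p.eval ζ) + (g ζ - q.eval ζ) := by
    simp [Polynomial.eval_add]; ring
  rw [this]
  calc Complex.abs _ ≤ Complex.abs (f ζ - p.eval ζ) + Complex.abs (g ζ - q.eval ζ) :=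
        Complex.abs.add_le _ _
    _ ≤ δ := by linarith

lemma Approx.mul {f g : ℂ → ℂ} (hf : Approx R η f) (hg : Approx R η g) :
    Approx R η fun ζ => f ζ * g ζ := by
  intro δ hδ
  obtain ⟨Mf, hMf0, hMf⟩ := hf.bound
  obtain ⟨Mg, hMg0, hMg⟩ := hg.bound
  obtain ⟨p, hp⟩ := hf (δ / (2 * (Mg + 1))) (by positivity)
  obtain ⟨q, hq⟩ := hg (min 1 (δ / (2 * (Mf + 1)))) (by positivity)
  refine ⟨p * q, fun ζ hζ => ?_⟩
  have h1 := hp ζ hζ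
  have h2 := hq ζ hζ
  have h3 := hMf ζ hζ
  have h4 := hMg ζ hζ
  have hqb : Complex.abs (q.eval ζ) ≤ Mg + 1 := by
    have he : q.eval ζ = g ζ - (g ζ - q.eval ζ) := by ring
    rw [he]
    calc Complex.abs (g ζ - (g ζ - q.eval ζ))
        ≤ Complex.abs (g ζ) + Complex.abs (g ζ - q.eval ζ) := by
          simpa [Complex.abs.map_sub (q.eval ζ) (g ζ)] using
            Complex.abs.add_le (g ζ) (-(g ζ - q.eval ζ))
      _ ≤ Mg + 1 := by
          have := le_trans h2 (min_le_left _ _)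
          linarith
  have key : f ζ * g ζ - (p * q).eval ζ
      = f ζ * (g ζ - q.eval ζ) + (f ζ - p.eval ζ) * q.eval ζ := by
    simp [Polynomial.eval_mul]; ring
  rw [key]
  have e1 : Complex.abs (f ζ * (g ζ - q.eval ζ)) ≤ Mf * (δ / (2 * (Mf + 1))) := by
    rw [map_mul]
    have hg2 : Complex.abs (g ζ - q.eval ζ) ≤ δ / (2 * (Mf + 1)) :=
      le_trans h2 (min_le_right _ _)
    exact mul_le_mul h3 hg2 (Complex.abs.nonneg _) hMf0
  have e2 : Complex.abs ((f ζ - p.eval ζ) * q.eval ζ) ≤ (δ / (2 * (Mg + 1))) * (Mg + 1) := by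
    rw [map_mul]
    exact mul_le_mul h1 hqb (Complex.abs.nonneg _) (by positivity)
  calc Complex.abs _ ≤ Complex.abs (f ζ * (g ζ - q.eval ζ))
        + Complex.abs ((f ζ - p.eval ζ) * q.eval ζ) := Complex.abs.add_le _ _
    _ ≤ Mf * (δ / (2 * (Mf + 1))) + (δ / (2 * (Mg + 1))) * (Mg + 1) := by linarith
    _ ≤ δ / 2 + δ / 2 := by
        have hMf1 : (0:ℝ) < Mf + 1 := by linarith
        have hMg1 : (0:ℝ) < Mg + 1 := by linarith
        have b1 : Mf * (δ / (2 * (Mf + 1))) ≤ δ / 2 := by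
          rw [mul_div_assoc', div_le_div_iff₀ (by positivity) (by norm_num : (0:ℝ) < 2)]
          nlinarith
        have b2 : (δ / (2 * (Mg + 1))) * (Mg + 1) ≤ δ / 2 := by
          rw [div_mul_eq_mul_div, div_le_div_iff₀ (by positivity) (by norm_num : (0:ℝ) < 2)]
          nlinarith
        linarith
    _ = δ := by ring

lemma Approx.pow {f : ℂ → ℂ} (hf : Approx R η f) (n : ℕ) :
    Approx R η fun ζ => (f ζ) ^ n := by
  induction n with
  | zero => simpa using approx_const 1
  | succ n ih =>
      have : (fun ζ => f ζ ^ (n + 1)) = fun ζ => f ζ ^ n * f ζ := by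
        funext ζ; ring
      rw [this]
      exact ih.mul hf

lemma approx_sum {n : ℕ} {F : ℕ → ℂ → ℂ} (h : ∀ j, j < n → Approx R η (F j)) :
    Approx R η fun ζ => ∑ j ∈ range n, F j ζ := by
  induction n with
  | zero => simpa using approx_const 0
  | succ n ih =>
      have : (fun ζ => ∑ j ∈ range (n + 1), F j ζ)
          = fun ζ => (∑ j ∈ range n, F j ζ) + F n ζ := by
        funext ζ; rw [Finset.sum_range_succ]
      rw [this]
      exact (ih fun j hj => h j (by omega)).add (h n (by omega))

lemma K_line_dist (hη : 0 < η) {ζ : ℂ} (hζ : ζ ∈ K R η) (t : ℝ) :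
    η / 2 ≤ Complex.abs ((bb η : ℂ) + (t : ℂ) * I - ζ) := by
  have hre : ((bb η : ℂ) + (t : ℂ) * I - ζ).re = bb η - ζ.re := by simp
  have habs : η / 2 ≤ |bb η - ζ.re| := by
    rcases hζ.2 with h | h
    · refine le_abs.mpr (Or.inr ?_)
      unfold bb
      linarith
    · refine le_abs.mpr (Or.inl ?_)
      unfold bb
      linarith
  calc η / 2 ≤ |((bb η : ℂ) + (t : ℂ) * I - ζ).re| := by rw [hre]; exact habs
    _ ≤ Complex.abs _ := Complex.abs_re_le_abs _

lemma approx_pole_far {q : ℂ} (hq : 2 * (|R| + 1) ≤ Complex.abs q) :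
    Approx R η fun ζ => (q - ζ)⁻¹ := by
  intro δ hδ
  obtain ⟨n, hn⟩ := exists_pow_lt_of_lt_one hδ (by norm_num : (1 : ℝ) / 2 < 1)
  refine ⟨∑ k ∈ range n, Polynomial.C ((q ^ (k + 1))⁻¹) * Polynomial.X ^ k, fun ζ hζ => ?_⟩
  have hζR : Complex.abs ζ ≤ |R| := K_abs hζ
  have hRnn : (0 : ℝ) ≤ |R| := abs_nonneg R
  have hq0 : q ≠ 0 := by
    intro h
    rw [h] at hq
    simp at hq
    linarith
  have hqζ : |R| + 1 ≤ Complex.abs (q - ζ) := by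
    have h := norm_sub_norm_le q ζ
    simp only [Complex.norm_eq_abs] at h
    linarith
  have hqζ0 : q - ζ ≠ 0 := by
    intro h
    rw [h] at hqζ
    simp at hqζ
    linarith
  have heval : (∑ k ∈ range n, Polynomial.C ((q ^ (k + 1))⁻¹) * Polynomial.X ^ k).eval ζ
      = ∑ k ∈ range n, (q ^ (k + 1))⁻¹ * ζ ^ k := by
    simp [Polynomial.eval_finset_sum]
  have key : (q - ζ) * ∑ k ∈ range n, (q ^ (k + 1))⁻¹ * ζ ^ k = 1 - (ζ / q) ^ n := by
    rw [Finset.mul_sum]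
    have hterm : ∀ k ∈ range n,
        (q - ζ) * ((q ^ (k + 1))⁻¹ * ζ ^ k) = (ζ / q) ^ k - (ζ / q) ^ (k + 1) := by
      intro k _
      rw [div_pow, div_pow]
      field_simp
      ring
    rw [Finset.sum_congr rfl hterm, Finset.sum_range_sub' (fun k => (ζ / q) ^ k) n]
    simp
  have errid : (q - ζ)⁻¹ - ∑ k ∈ range n, (q ^ (k + 1))⁻¹ * ζ ^ k
      = (ζ / q) ^ n * (q - ζ)⁻¹ := by
    have h2 : (q - ζ)⁻¹ - ∑ k ∈ range n, (q ^ (k + 1))⁻¹ * ζ ^ k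
        = (q - ζ)⁻¹ * (1 - (q - ζ) * ∑ k ∈ range n, (q ^ (k + 1))⁻¹ * ζ ^ k) := by
      rw [mul_sub, mul_one, ← mul_assoc, inv_mul_cancel₀ hqζ0, one_mul]
    rw [h2, key]
    ring
  rw [heval, errid]
  rw [map_mul, map_pow, map_div₀]
  have hb1 : Complex.abs ζ / Complex.abs q ≤ 1 / 2 := by
    rw [div_le_div_iff₀ (by linarith) (by norm_num : (0:ℝ) < 2)]
    linarith
  have hb2 : Complex.abs ((q - ζ)⁻¹) ≤ 1 := by
    rw [map_inv₀]
    rw [inv_le_one_iff₀]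
    right
    linarith
  calc (Complex.abs ζ / Complex.abs q) ^ n * Complex.abs (q - ζ)⁻¹
      ≤ (1 / 2) ^ n * 1 := by
        refine mul_le_mul (pow_le_pow_left₀ (by positivity) hb1 n) hb2 (Complex.abs.nonneg _)
          (by positivity)
    _ ≤ δ := by rw [mul_one]; exact hn.le

lemma approx_pole_step (hη : 0 < η) {q q' : ℂ}
    (hd : Complex.abs (q - q') ≤ η / 4)
    (hqK : ∀ ζ ∈ K R η, η / 2 ≤ Complex.abs (q - ζ))
    (hq'K : ∀ ζ ∈ K R η, η / 2 ≤ Complex.abs (q' - ζ))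
    (IH : Approx R η fun ζ => (q' - ζ)⁻¹) :
    Approx R η fun ζ => (q - ζ)⁻¹ := by
  intro δ hδ
  obtain ⟨n, hn⟩ := exists_pow_lt_of_lt_one (show (0:ℝ) < δ * (η / 4) by positivity)
    (by norm_num : (1 : ℝ) / 2 < 1)
  set d := q - q' with hdd
  have hg : Approx R η fun ζ => ∑ k ∈ range n, (-d) ^ k * ((q' - ζ)⁻¹) ^ (k + 1) :=
    approx_sum fun j hj => (approx_const ((-d) ^ j)).mul (IH.pow (j + 1))
  obtain ⟨p, hp⟩ := hg (δ / 2) (by positivity)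
  refine ⟨p, fun ζ hζ => ?_⟩
  have h1 : η / 2 ≤ Complex.abs (q - ζ) := hqK ζ hζ
  have h2 : η / 2 ≤ Complex.abs (q' - ζ) := hq'K ζ hζ
  have hne1 : q - ζ ≠ 0 := by
    intro h; rw [h] at h1; simp at h1; linarith
  have hne2 : q' - ζ ≠ 0 := by
    intro h; rw [h] at h2; simp at h2; linarith
  have key : (q - ζ) * ∑ k ∈ range n, (-d) ^ k * ((q' - ζ)⁻¹) ^ (k + 1)
      = 1 - (-d / (q' - ζ)) ^ n := by
    rw [Finset.mul_sum]
    have hterm : ∀ k ∈ range n, (q - ζ) * ((-d) ^ k * ((q' - ζ)⁻¹) ^ (k + 1))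
        = (-d / (q' - ζ)) ^ k - (-d / (q' - ζ)) ^ (k + 1) := by
      intro k _
      have hqe : q - ζ = (q' - ζ) + d := by rw [hdd]; ring
      rw [hqe, div_pow, div_pow, inv_pow]
      field_simp
      ring
    rw [Finset.sum_congr rfl hterm, Finset.sum_range_sub' (fun k => (-d / (q' - ζ)) ^ k) n]
    simp
  have errid : (q - ζ)⁻¹ - ∑ k ∈ range n, (-d) ^ k * ((q' - ζ)⁻¹) ^ (k + 1)
      = (-d / (q' - ζ)) ^ n * (q - ζ)⁻¹ := by
    have h3 : (q - ζ)⁻¹ - ∑ k ∈ range n, (-d) ^ k * ((q' - ζ)⁻¹) ^ (k + 1)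
        = (q - ζ)⁻¹ * (1 - (q - ζ) * ∑ k ∈ range n, (-d) ^ k * ((q' - ζ)⁻¹) ^ (k + 1)) := by
      rw [mul_sub, mul_one, ← mul_assoc, inv_mul_cancel₀ hne1, one_mul]
    rw [h3, key]
    ring
  have hsplit : (q - ζ)⁻¹ - p.eval ζ
      = ((q - ζ)⁻¹ - ∑ k ∈ range n, (-d) ^ k * ((q' - ζ)⁻¹) ^ (k + 1))
        + ((∑ k ∈ range n, (-d) ^ k * ((q' - ζ)⁻¹) ^ (k + 1)) - p.eval ζ) := by ring
  rw [hsplit]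
  have e1 : Complex.abs ((q - ζ)⁻¹ - ∑ k ∈ range n, (-d) ^ k * ((q' - ζ)⁻¹) ^ (k + 1))
      ≤ δ / 2 := by
    rw [errid, map_mul, map_pow, map_div₀]
    have hd2 : Complex.abs (-d) / Complex.abs (q' - ζ) ≤ 1 / 2 := by
      rw [Complex.abs.map_neg]
      rw [div_le_div_iff₀ (by linarith) (by norm_num : (0:ℝ) < 2)]
      linarith
    have hd3 : Complex.abs ((q - ζ)⁻¹) ≤ (η / 2)⁻¹ := by
      rw [map_inv₀]
      exact inv_anti₀ (by positivity) h1
    calc (Complex.abs (-d) / Complex.abs (q' - ζ)) ^ n * Complex.abs ((q - ζ)⁻¹)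
        ≤ (1 / 2) ^ n * (η / 2)⁻¹ := by
          refine mul_le_mul (pow_le_pow_left₀ (by positivity) hd2 n) hd3
            (Complex.abs.nonneg _) (by positivity)
      _ ≤ δ / 2 := by
          have hstep : (1 / 2 : ℝ) ^ n * (η / 2)⁻¹ ≤ (δ * (η / 4)) * (η / 2)⁻¹ :=
            mul_le_mul_of_nonneg_right hn.le (by positivity)
          have heq : (δ * (η / 4)) * ((η:ℝ) / 2)⁻¹ = δ / 2 := by
            field_simp
            ring
          linarith
  calc Complex.abs _ ≤ Complex.abs _ + Complex.abs _ := Complex.abs.add_le _ _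
    _ ≤ δ / 2 + δ / 2 := by
        have := hp ζ hζ
        exact add_le_add e1 this
    _ = δ := by ring

lemma approx_pole_line (hη : 0 < η) (t : ℝ) :
    Approx R η fun ζ => ((bb η : ℂ) + (t : ℂ) * I - ζ)⁻¹ := by
  set s : ℝ := η / 4 with hs
  have hs0 : 0 < s := by rw [hs]; positivity
  set T0 : ℝ := 2 * (|R| + 1) with hT0
  set n : ℕ := ⌈(T0 - t) / s⌉₊ with hn
  have hbase : T0 ≤ t + n * s := by
    have h1 : (T0 - t) / s ≤ (n : ℝ) := Nat.le_ceil _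
    have h2 : (T0 - t) / s * s ≤ (n : ℝ) * s := mul_le_mul_of_nonneg_right h1 hs0.le
    rw [div_mul_cancel₀ _ hs0.ne'] at h2
    linarith
  -- downward induction
  have main : ∀ m : ℕ, Approx R η fun ζ => ((bb η : ℂ) + (((t + (n - m : ℕ) * s : ℝ)) : ℂ) * I - ζ)⁻¹ := by
    intro m
    induction m with
    | zero =>
        apply approx_pole_far
        have him : t + ((n - 0 : ℕ) : ℝ) * s = t + n * s := by norm_num
        rw [him]
        have him2 : ((bb η : ℂ) + ((t + n * s : ℝ) : ℂ) * I).im = t + n * s := by simp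
        have hpos : 0 < t + n * s := by
          have : (0:ℝ) < T0 := by rw [hT0]; positivity
          linarith
        calc 2 * (|R| + 1) = T0 := by rw [hT0]
          _ ≤ t + n * s := hbase
          _ = |((bb η : ℂ) + ((t + n * s : ℝ) : ℂ) * I).im| := by
              rw [him2, abs_of_pos hpos]
          _ ≤ Complex.abs _ := Complex.abs_im_le_abs _
    | succ m ih =>
        by_cases hm : m < n
        · have hcast : ((n - (m + 1) : ℕ) : ℝ) + 1 = ((n - m : ℕ) : ℝ) := by
            have : (n - (m + 1)) + 1 = n - m := by omega
            exact_mod_cast congrArg (Nat.cast : ℕ → ℝ) this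
          apply approx_pole_step hη ?_ (fun ζ hζ => K_line_dist hη hζ _)
            (fun ζ hζ => K_line_dist hη hζ _) ih
          have : ((bb η : ℂ) + ((t + ((n - (m+1) : ℕ) : ℝ) * s : ℝ) : ℂ) * I)
              - ((bb η : ℂ) + ((t + ((n - m : ℕ) : ℝ) * s : ℝ) : ℂ) * I)
              = ((-s : ℝ) : ℂ) * I := by
            push_cast [← hcast]
            ring
          rw [this]
          have : Complex.abs (((-s : ℝ) : ℂ) * I) = s := by
            rw [map_mul, Complex.abs_I, mul_one, Complex.abs_ofReal, abs_neg,
              abs_of_pos hs0]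
          rw [this, hs]
        · have : n - (m + 1) = n - m := by omega
          rw [this]
          exact ih
  have := main n
  have hfin : t + ((n - n : ℕ) : ℝ) * s = t := by simp
  rwa [hfin] at this

lemma approx_log_line (hη : 0 < η) (t : ℝ) {c : ℂ} (hc : Complex.abs c ≤ η / 4) :
    Approx R η fun ζ => Complex.log (1 + c * ((bb η : ℂ) + (t : ℂ) * I - ζ)⁻¹) := by
  intro δ hδ
  obtain ⟨n, hn⟩ := exists_pow_lt_of_lt_one (half_pos hδ) (by norm_num : (1 : ℝ) / 2 < 1)
  set u : ℂ → ℂ := fun ζ => c * ((bb η : ℂ) + (t : ℂ) * I - ζ)⁻¹ with hu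
  have hub : ∀ ζ ∈ K R η, Complex.abs (u ζ) ≤ 1 / 2 := by
    intro ζ hζ
    have hld := K_line_dist hη hζ t
    rw [hu]
    simp only [map_mul, map_inv₀]
    calc Complex.abs c * (Complex.abs ((bb η : ℂ) + (t : ℂ) * I - ζ))⁻¹
        ≤ (η / 4) * (η / 2)⁻¹ := by
          refine mul_le_mul hc (inv_anti₀ (by positivity) hld) (by positivity) (by positivity)
      _ = 1 / 2 := by field_simp; ring
  have happ : Approx R η fun ζ => Complex.logTaylor (n + 1) (u ζ) := by
    have heq : (fun ζ => Complex.logTaylor (n + 1) (u ζ))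
        = fun ζ => ∑ j ∈ range (n + 1), ((-1) ^ (j + 1) / (j : ℂ)) * (u ζ) ^ j := by
      funext ζ
      rw [Complex.logTaylor]
      exact Finset.sum_congr rfl fun j _ => by ring
    rw [heq]
    exact approx_sum fun j hj => (approx_const _).mul
      (((approx_const c).mul (approx_pole_line hη t)).pow j)
  obtain ⟨p, hp⟩ := happ (δ / 2) (by positivity)
  refine ⟨p, fun ζ hζ => ?_⟩
  have hu2 := hub ζ hζ
  have hu1 : ‖u ζ‖ < 1 := by
    rw [Complex.norm_eq_abs]; linarith
  have htay := Complex.norm_log_sub_logTaylor_le n hu1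
  have htay2 : ‖Complex.log (1 + u ζ) - Complex.logTaylor (n + 1) (u ζ)‖ ≤ (1 / 2) ^ n := by
    refine le_trans htay ?_
    have h1 : ‖u ζ‖ ^ (n + 1) ≤ (1 / 2) ^ (n + 1) :=
      pow_le_pow_left₀ (norm_nonneg _) (by rw [Complex.norm_eq_abs]; exact hu2) _
    have h2 : (1 - ‖u ζ‖)⁻¹ ≤ 2 := by
      rw [show (2:ℝ) = (1/2)⁻¹ by norm_num]
      refine inv_anti₀ (by norm_num) ?_
      rw [Complex.norm_eq_abs]; linarith
    have h3 : (0:ℝ) < 1 - ‖u ζ‖ := by linarith [norm_nonneg (u ζ)]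
    calc ‖u ζ‖ ^ (n + 1) * (1 - ‖u ζ‖)⁻¹ / (n + 1)
        ≤ (1 / 2) ^ (n + 1) * 2 / 1 := by
          gcongr <;> first
            | norm_num
            | linarith [norm_nonneg (u ζ)]
            | (rw [Complex.norm_eq_abs]; exact hu2)
      _ = (1 / 2) ^ n := by field_simp; ring
  have hfinal := hp ζ hζ
  have hsplit : Complex.log (1 + u ζ) - p.eval ζ
      = (Complex.log (1 + u ζ) - Complex.logTaylor (n + 1) (u ζ))
        + (Complex.logTaylor (n + 1) (u ζ) - p.eval ζ) := by ring
  calc Complex.abs (Complex.log (1 + u ζ) - p.eval ζ)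
      ≤ Complex.abs (Complex.log (1 + u ζ) - Complex.logTaylor (n + 1) (u ζ))
        + Complex.abs (Complex.logTaylor (n + 1) (u ζ) - p.eval ζ) := by
        rw [hsplit]; exact Complex.abs.add_le _ _
    _ ≤ (1 / 2) ^ n + δ / 2 := by
        refine add_le_add ?_ hfinal
        rw [← Complex.norm_eq_abs]
        exact htay2
    _ ≤ δ := by linarith
lemma sum_log_eq (hη : 0 < η) {H s : ℝ} {N : ℕ} (hs : 0 < s)
    (hNs : (N : ℝ) * s = 2 * H) (hH : |R| < H) {ζ : ℂ}
    (hζa : Complex.abs ζ ≤ R) (hζK : 1 ≤ ζ.re ∨ ζ.re ≤ 1 - η) :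
    ∑ j ∈ range N,
        Complex.log (1 + (-(s : ℂ) * I) * ((bb η : ℂ) + ((H - (j : ℝ) * s : ℝ) : ℂ) * I - ζ)⁻¹)
      = Complex.log ((bb η : ℂ) + ((H - (N : ℝ) * s : ℝ) : ℂ) * I - ζ)
        - Complex.log ((bb η : ℂ) + ((H - (0 : ℝ) * s : ℝ) : ℂ) * I - ζ)
        + (if 1 ≤ ζ.re then 2 * Real.pi * I else 0) := by
  set w : ℕ → ℂ := fun j => (bb η : ℂ) + ((H - (j : ℝ) * s : ℝ) : ℂ) * I - ζ with hw
  have hre : ∀ j : ℕ, (w j).re = bb η - ζ.re := by intro j; simp [hw]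
  have him : ∀ j : ℕ, (w j).im = H - (j : ℝ) * s - ζ.im := by intro j; simp [hw]
  have hstep : ∀ j : ℕ, w (j + 1) = w j - (s : ℂ) * I := by
    intro j
    rw [hw]
    simp only
    apply Complex.ext <;> simp <;> push_cast <;> ring
  have hquot : ∀ j : ℕ, w j ≠ 0 → 1 + (-(s : ℂ) * I) * (w j)⁻¹ = w (j + 1) / w j := by
    intro j h0
    rw [hstep j, sub_div, div_self h0, div_eq_mul_inv]
    ring
  have himζ : |ζ.im| ≤ |R| :=
    le_trans (Complex.abs_im_le_abs ζ) (le_trans hζa (le_abs_self R))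
  have himζ1 : -H < ζ.im := by
    have := (abs_le.mp himζ).1
    linarith
  have himζ2 : ζ.im < H := by
    have := (abs_le.mp himζ).2
    linarith
  have hπ := Real.pi_pos
  -- the goal in terms of w
  suffices hgoal : ∑ j ∈ range N, Complex.log (1 + (-(s : ℂ) * I) * (w j)⁻¹)
      = Complex.log (w N) - Complex.log (w 0)
        + (if 1 ≤ ζ.re then 2 * Real.pi * I else 0) by
    simpa only [hw, Nat.cast_zero] using hgoal
  rcases hζK with hA | hB
  · -- case A : right of the line, one wrap
    rw [if_pos hA]
    have hneg : ∀ j : ℕ, (w j).re < 0 := by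
      intro j
      rw [hre]
      unfold bb
      linarith
    have hne : ∀ j : ℕ, w j ≠ 0 := by
      intro j h0
      have := hneg j
      rw [h0] at this
      simp at this
    set jst : ℕ := ⌊(H - ζ.im) / s⌋₊ with hjst
    have hx0 : 0 ≤ (H - ζ.im) / s := div_nonneg (by linarith) hs.le
    have hj1 : (jst : ℝ) * s ≤ H - ζ.im := by
      have h := Nat.floor_le hx0
      have := mul_le_mul_of_nonneg_right h hs.le
      rwa [div_mul_cancel₀ _ hs.ne'] at this
    have hj2 : H - ζ.im < ((jst : ℝ) + 1) * s := by
      have h := Nat.lt_floor_add_one ((H - ζ.im) / s)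
      have := mul_lt_mul_of_pos_right h hs
      rwa [div_mul_cancel₀ _ hs.ne'] at this
    have hjN : jst < N := by
      rw [hjst]
      rw [Nat.floor_lt hx0]
      rw [div_lt_iff₀ hs]
      rw [show (N : ℝ) * s = 2 * H from hNs] at *
      linarith
    have him_pos : ∀ j : ℕ, j ≤ jst → 0 ≤ (w j).im := by
      intro j hj
      rw [him]
      have : (j : ℝ) * s ≤ (jst : ℝ) * s :=
        mul_le_mul_of_nonneg_right (by exact_mod_cast hj) hs.le
      linarith
    have him_neg : ∀ j : ℕ, jst < j → (w j).im < 0 := by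
      intro j hj
      rw [him]
      have : ((jst : ℝ) + 1) * s ≤ (j : ℝ) * s := by
        refine mul_le_mul_of_nonneg_right ?_ hs.le
        exact_mod_cast hj
      linarith
    have key : ∀ j ∈ range N, Complex.log (1 + (-(s : ℂ) * I) * (w j)⁻¹)
        = (Complex.log (w (j + 1)) - Complex.log (w j))
          + (if j = jst then 2 * Real.pi * I else 0) := by
      intro j _
      rw [hquot j (hne j)]
      rcases lt_trichotomy j jst with hlt | heq | hgt
      · rw [if_neg (by omega), add_zero]
        have a1 := arg_UL (hneg j) (him_pos j hlt.le)
        have a2 := arg_UL (hneg (j + 1)) (him_pos (j + 1) (by omega))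
        exact log_div_no_wrap (hne j) (hne (j + 1)) (by linarith) (by linarith)
      · rw [if_pos heq]
        have a1 := arg_UL (hneg j) (him_pos j heq.le)
        have a2 := arg_LL (hneg (j + 1)) (him_neg (j + 1) (by omega))
        exact log_div_wrap (hne j) (hne (j + 1)) (by linarith) (by linarith)
      · rw [if_neg (by omega), add_zero]
        have a1 := arg_LL (hneg j) (him_neg j hgt)
        have a2 := arg_LL (hneg (j + 1)) (him_neg (j + 1) (by omega))
        exact log_div_no_wrap (hne j) (hne (j + 1)) (by linarith) (by linarith)
    rw [Finset.sum_congr rfl key, Finset.sum_add_distrib,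
      Finset.sum_range_sub (fun j => Complex.log (w j)) N,
      Finset.sum_ite_eq' (range N) jst (fun _ => 2 * (Real.pi : ℂ) * I),
      if_pos (Finset.mem_range.mpr hjN)]
  · -- case B : left of the line, no wrap
    rw [if_neg (by intro h; unfold bb at *; linarith)]
    have hpos : ∀ j : ℕ, 0 < (w j).re := by
      intro j
      rw [hre]
      unfold bb
      linarith
    have hne : ∀ j : ℕ, w j ≠ 0 := by
      intro j h0
      have := hpos j
      rw [h0] at this
      simp at this
    have key : ∀ j ∈ range N, Complex.log (1 + (-(s : ℂ) * I) * (w j)⁻¹)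
        = Complex.log (w (j + 1)) - Complex.log (w j) := by
      intro j _
      rw [hquot j (hne j)]
      have a1 := abs_lt.mp (arg_RR (hpos j))
      have a2 := abs_lt.mp (arg_RR (hpos (j + 1)))
      exact log_div_no_wrap (hne j) (hne (j + 1)) (by linarith) (by linarith)
    rw [Finset.sum_congr rfl key, Finset.sum_range_sub (fun j => Complex.log (w j)) N,
      add_zero]

end
end Stmt16Aux

set_option maxHeartbeats 2000000 in
open Stmt16Aux in
theorem stmt16 (R η ε L : ℝ) (hη : 0 < η) (hε : 0 < ε) :
    ∃ Φ : Polynomial ℂ,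
      (∀ ζ : ℂ, ‖ζ‖ ≤ R → 1 ≤ ζ.re →
        ‖Φ.eval ζ - ((L : ℂ) + (ε : ℂ))‖ < ε) ∧
      (∀ ζ : ℂ, ‖ζ‖ ≤ R → ζ.re ≤ 1 - η →
        ‖Φ.eval ζ‖ < ε) := by
  classical
  have hπ := Real.pi_pos
  have hπ3 := Real.pi_gt_three
  set M : ℝ := Complex.abs ((L : ℂ) + (ε : ℂ)) with hM
  have hM0 : 0 ≤ M := Complex.abs.nonneg _
  clear_value M
  set D : ℝ := |R| + |bb η| + 2 with hD
  have hD0 : (0:ℝ) < D := by rw [hD]; positivity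
  clear_value D
  set H : ℝ := D + 8 * D * (M + ε + 1) / ε with hH
  have hHD : H - D = 8 * D * (M + ε + 1) / ε := by rw [hH]; ring
  clear_value H
  have hHD0 : 0 < H - D := by rw [hHD]; positivity
  have hRH : |R| < H := by
    have h1 : |R| < D := by rw [hD]; have := abs_nonneg (bb η); linarith
    linarith
  have hH0 : 0 < H := by linarith [abs_nonneg R]
  set N : ℕ := ⌈8 * H / η⌉₊ with hN
  have hN0 : 0 < N := by rw [hN]; exact Nat.ceil_pos.mpr (by positivity)
  have hNceil : 8 * H / η ≤ (N : ℝ) := by rw [hN]; exact Nat.le_ceil _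
  clear_value N
  have hNR : (0:ℝ) < (N : ℝ) := by exact_mod_cast hN0
  set s : ℝ := 2 * H / N with hs
  have hs0 : 0 < s := by rw [hs]; positivity
  have hNs : (N : ℝ) * s = 2 * H := by rw [hs]; field_simp
  clear_value s
  have hs4 : s ≤ η / 4 := by
    have h8 : 8 * H ≤ (N : ℝ) * η := by
      have := mul_le_mul_of_nonneg_right hNceil hη.le
      rwa [div_mul_cancel₀ _ hη.ne'] at this
    nlinarith
  have hcabs : Complex.abs (-(s : ℂ) * I) ≤ η / 4 := by
    rw [map_mul, Complex.abs_I, mul_one, Complex.abs.map_neg, Complex.abs_ofReal,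
      abs_of_pos hs0]
    exact hs4
  set C0 : ℂ := ((L : ℂ) + (ε : ℂ)) / (2 * (Real.pi : ℂ) * I) with hC0
  have h2πI : (2 * (Real.pi : ℂ) * I) ≠ 0 := by
    simp [Complex.ext_iff, Real.pi_ne_zero]
  have h2πIabs : Complex.abs (2 * (Real.pi : ℂ) * I) = 2 * Real.pi := by
    rw [map_mul, Complex.abs_I, mul_one, map_mul, Complex.abs_two, Complex.abs_ofReal,
      abs_of_pos hπ]
  have hC0abs : Complex.abs C0 = M / (2 * Real.pi) := by
    rw [hC0, map_div₀, hM, h2πIabs]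
  have hC02 : C0 * (2 * (Real.pi : ℂ) * I) = (L : ℂ) + (ε : ℂ) := by
    rw [hC0, div_mul_cancel₀ _ h2πI]
  clear_value C0
  obtain ⟨p, hp⟩ := (((approx_const C0).mul ((approx_const ((Real.pi : ℂ) * I)).add
      (approx_sum fun j _ => approx_log_line hη (H - (j : ℝ) * s) hcabs))) :
        Approx R η fun ζ => C0 * ((Real.pi : ℂ) * I
          + ∑ j ∈ range N, Complex.log
            (1 + (-(s : ℂ) * I) * ((bb η : ℂ) + ((H - (j : ℝ) * s : ℝ) : ℂ) * I - ζ)⁻¹)))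
    (ε / 4) (by positivity)
  have hC0e : ∀ e : ℂ, Complex.abs e ≤ (3 / 2) * (ε / (4 * (M + ε + 1)))
      → Complex.abs (C0 * e) ≤ ε / 16 := by
    intro e heb
    rw [map_mul, hC0abs]
    have hT0 : (0:ℝ) < M + ε + 1 := by linarith
    have hL : (M / (2 * Real.pi)) * ((3 / 2) * (ε / (4 * (M + ε + 1))))
        = 3 * M * ε / (16 * Real.pi * (M + ε + 1)) := by
      field_simp
      ring
    have k1 : 3 * M + 3 * ε + 3 ≤ Real.pi * (M + ε + 1) := by nlinarith
    calc M / (2 * Real.pi) * Complex.abs e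
        ≤ M / (2 * Real.pi) * ((3 / 2) * (ε / (4 * (M + ε + 1)))) :=
          mul_le_mul_of_nonneg_left heb (by positivity)
      _ = 3 * M * ε / (16 * Real.pi * (M + ε + 1)) := hL
      _ ≤ ε / 16 := by
          rw [div_le_div_iff₀ (by positivity) (by norm_num : (0:ℝ) < 16)]
          nlinarith [mul_le_mul_of_nonneg_left k1 (by positivity : (0:ℝ) ≤ 16 * ε)]
  have core : ∀ ζ : ℂ, Complex.abs ζ ≤ R →
      Complex.abs (Complex.log ((bb η : ℂ) + ((H - (N : ℝ) * s : ℝ) : ℂ) * I - ζ)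
        - Complex.log ((bb η : ℂ) + ((H - (0 : ℝ) * s : ℝ) : ℂ) * I - ζ)
        + (Real.pi : ℂ) * I) ≤ (3 / 2) * (ε / (4 * (M + ε + 1))) := by
    intro ζ habs
    set A0 : ℂ := (bb η : ℂ) + ((H - (0 : ℝ) * s : ℝ) : ℂ) * I - ζ with hA0
    set B0 : ℂ := (bb η : ℂ) + ((H - (N : ℝ) * s : ℝ) : ℂ) * I - ζ with hB0
    have himζ : |ζ.im| ≤ |R| :=
      le_trans (Complex.abs_im_le_abs ζ) (le_trans habs (le_abs_self R))
    have himζ2 := abs_le.mp himζ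
    have hNH : H - (N : ℝ) * s = -H := by linarith [hNs]
    have hA0' : A0 = (bb η : ℂ) + (H : ℂ) * I - ζ := by
      rw [hA0]
      norm_num
    have hB0' : B0 = (bb η : ℂ) + (-(H : ℂ)) * I - ζ := by
      rw [hB0]
      have hc : ((H - (N : ℝ) * s : ℝ) : ℂ) = -(H : ℂ) := by
        rw [hNH]
        push_cast
        ring
      rw [hc]
    have hA0im : A0.im = H - ζ.im := by rw [hA0']; simp
    have hB0im : B0.im = -H - ζ.im := by rw [hB0']; simp
    have hA0pos : 0 < A0.im := by rw [hA0im]; linarith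
    have hB0neg : B0.im < 0 := by rw [hB0im]; linarith
    have hA0ne : A0 ≠ 0 := by
      intro h; rw [h] at hA0pos; simp at hA0pos
    have hB0ne : B0 ≠ 0 := by
      intro h; rw [h] at hB0neg; simp at hB0neg
    set x : ℂ := 2 * (ζ - (bb η : ℂ)) / A0 with hx
    have hρ : -B0 / A0 = 1 + x := by
      have hkey : -B0 = A0 + 2 * (ζ - (bb η : ℂ)) := by
        rw [hA0', hB0']
        ring
      rw [hkey, add_div, div_self hA0ne, hx]
    set e : ℂ := Complex.log B0 - Complex.log A0 + (Real.pi : ℂ) * I with he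
    have hexp : Complex.exp e = 1 + x := by
      rw [he, Complex.exp_add, Complex.exp_sub, Complex.exp_log hB0ne,
        Complex.exp_log hA0ne, Complex.exp_pi_mul_I, ← hρ]
      ring
    have heim : -Real.pi < e.im ∧ e.im < Real.pi := by
      have hval : e.im = B0.arg - A0.arg + Real.pi := by
        rw [he]
        simp [Complex.log_im]
      have hb1 : B0.arg < 0 := Complex.arg_neg_iff.mpr hB0neg
      have hb2 := Complex.neg_pi_lt_arg B0
      have ha1 : 0 < A0.arg := by
        have h0 : 0 ≤ A0.arg := Complex.arg_nonneg_iff.mpr hA0pos.le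
        rcases h0.lt_or_eq with h | h
        · exact h
        · exfalso
          have := (Complex.arg_eq_zero_iff.mp h.symm).2
          linarith
      have ha2 := Complex.arg_le_pi A0
      constructor <;> rw [hval] <;> linarith
    have hee : e = Complex.log (1 + x) := by
      rw [← hexp, Complex.log_exp heim.1 heim.2.le]
    have hxb : Complex.abs x ≤ ε / (4 * (M + ε + 1)) := by
      have h1 : Complex.abs (ζ - (bb η : ℂ)) ≤ |R| + |bb η| := by
        calc Complex.abs (ζ - (bb η : ℂ))
            ≤ Complex.abs ζ + Complex.abs ((bb η : ℂ)) := by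
              simpa [sub_eq_add_neg] using Complex.abs.add_le ζ (-(bb η : ℂ))
          _ ≤ |R| + |bb η| := by
              rw [Complex.abs_ofReal]
              exact add_le_add (le_trans habs (le_abs_self R)) le_rfl
      have h2 : H - D ≤ Complex.abs A0 := by
        calc H - D ≤ H - ζ.im := by
              have : ζ.im ≤ D := by rw [hD]; linarith [himζ2.2, abs_nonneg (bb η)]
              linarith
          _ = A0.im := hA0im.symm
          _ ≤ |A0.im| := le_abs_self _
          _ ≤ Complex.abs A0 := Complex.abs_im_le_abs A0
      have h3 : Complex.abs x ≤ 2 * D / (H - D) := by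
        rw [hx, map_div₀, map_mul, Complex.abs_two]
        have hden : (0:ℝ) < Complex.abs A0 := lt_of_lt_of_le hHD0 h2
        rw [div_le_div_iff₀ hden hHD0]
        have h1D : Complex.abs (ζ - (bb η : ℂ)) ≤ D :=
          le_trans h1 (by rw [hD]; linarith)
        have hmm := mul_le_mul h1D h2 hHD0.le hD0.le
        linarith
      have h4 : 2 * D / (H - D) = ε / (4 * (M + ε + 1)) := by
        rw [hHD, div_div_eq_mul_div, div_eq_div_iff (by positivity) (by positivity)]
        ring
      rw [h4] at h3
      exact h3
    have hx12 : Complex.abs x ≤ 1 / 2 := by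
      refine hxb.trans ?_
      rw [div_le_div_iff₀ (by positivity) (by norm_num : (0:ℝ) < 2)]
      linarith
    calc Complex.abs (Complex.log B0 - Complex.log A0 + (Real.pi : ℂ) * I)
        = Complex.abs e := by rw [he]
      _ ≤ (3 / 2) * Complex.abs x := by
          rw [hee, ← Complex.norm_eq_abs, ← Complex.norm_eq_abs]
          exact Complex.norm_log_one_add_half_le_self
            (by rw [Complex.norm_eq_abs]; exact hx12)
      _ ≤ (3 / 2) * (ε / (4 * (M + ε + 1))) := by nlinarith
  refine ⟨p, ?_, ?_⟩
  · intro ζ habs hre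
    have hζK : ζ ∈ K R η := ⟨habs, Or.inl hre⟩
    have hid := sum_log_eq hη hs0 hNs hRH habs (Or.inl hre)
    rw [if_pos hre] at hid
    have hcore := core ζ habs
    have hpζ := hp ζ hζK
    simp only [] at hpζ
    rw [hid] at hpζ
    set LogB := Complex.log ((bb η : ℂ) + ((H - (N : ℝ) * s : ℝ) : ℂ) * I - ζ) with hLogB
    set LogA := Complex.log ((bb η : ℂ) + ((H - (0 : ℝ) * s : ℝ) : ℂ) * I - ζ) with hLogA
    have hval : C0 * ((Real.pi : ℂ) * I + (LogB - LogA + 2 * (Real.pi : ℂ) * I))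
        - ((L : ℂ) + (ε : ℂ))
        = C0 * (LogB - LogA + (Real.pi : ℂ) * I) := by
      rw [← hC02]
      ring
    have hsplit : p.eval ζ - ((L : ℂ) + (ε : ℂ))
        = -(C0 * ((Real.pi : ℂ) * I + (LogB - LogA + 2 * (Real.pi : ℂ) * I)) - p.eval ζ)
          + (C0 * ((Real.pi : ℂ) * I + (LogB - LogA + 2 * (Real.pi : ℂ) * I))
            - ((L : ℂ) + (ε : ℂ))) := by
      ring
    calc Complex.abs (p.eval ζ - ((L : ℂ) + (ε : ℂ)))
        ≤ Complex.abs (-(C0 * ((Real.pi : ℂ) * I + (LogB - LogA + 2 * (Real.pi : ℂ) * I))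
            - p.eval ζ))
          + Complex.abs (C0 * ((Real.pi : ℂ) * I + (LogB - LogA + 2 * (Real.pi : ℂ) * I))
            - ((L : ℂ) + (ε : ℂ))) := by
          rw [hsplit]
          exact Complex.abs.add_le _ _
      _ ≤ ε / 4 + ε / 16 := by
          refine add_le_add ?_ ?_
          · rw [Complex.abs.map_neg]
            exact hpζ
          · rw [hval]
            exact hC0e _ hcore
      _ < ε := by linarith
  · intro ζ habs hre
    have hζK : ζ ∈ K R η := ⟨habs, Or.inr hre⟩
    have hid := sum_log_eq hη hs0 hNs hRH habs (Or.inr hre)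
    rw [if_neg (by intro h; linarith)] at hid
    have hcore := core ζ habs
    have hpζ := hp ζ hζK
    simp only [] at hpζ
    rw [hid, add_zero] at hpζ
    set LogB := Complex.log ((bb η : ℂ) + ((H - (N : ℝ) * s : ℝ) : ℂ) * I - ζ) with hLogB
    set LogA := Complex.log ((bb η : ℂ) + ((H - (0 : ℝ) * s : ℝ) : ℂ) * I - ζ) with hLogA
    have hval : C0 * ((Real.pi : ℂ) * I + (LogB - LogA))
        = C0 * (LogB - LogA + (Real.pi : ℂ) * I) := by ring
    have hsplit : p.eval ζ
        = -(C0 * ((Real.pi : ℂ) * I + (LogB - LogA)) - p.eval ζ)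
          + C0 * ((Real.pi : ℂ) * I + (LogB - LogA)) := by ring
    calc Complex.abs (p.eval ζ)
        = Complex.abs (-(C0 * ((Real.pi : ℂ) * I + (LogB - LogA)) - p.eval ζ)
          + C0 * ((Real.pi : ℂ) * I + (LogB - LogA))) := congrArg Complex.abs hsplit
      _ ≤ Complex.abs (-(C0 * ((Real.pi : ℂ) * I + (LogB - LogA)) - p.eval ζ))
          + Complex.abs (C0 * ((Real.pi : ℂ) * I + (LogB - LogA))) :=
          Complex.abs.add_le _ _
      _ ≤ ε / 4 + ε / 16 := by
          refine add_le_add ?_ ?_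
          · rw [Complex.abs.map_neg]
            exact hpζ
          · rw [hval]
            exact hC0e _ hcore
      _ < ε := by linarith
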